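/- Let T be a set of disjoint c-gap increasing subsequences of f of length k₀ satisfying the greedy interleaving property. Fix ℓ ∈ [n] and scales t₁ ≥ t₂ + 1 + log₂(3) + log₂(c+1). If (i₁,…,i_{k₀}) is at scale t₁ and is (1/3)-cut at c with slack by ℓ, and (j₁,…,j_{k₀}) is at scale t₂ and is (1/3)-cut at c with slack by ℓ, then f(j_{c+1}) < f(i_{c+1}). -/
import Mathlib
set_option maxHeartbeats 1000000


lemma aux17 (c t₁ t₂ ℓ : ℕ) (a A b B i0 j0 : ℕ)
    (haA : a < A) (hbB : b < B)
    (hsep : (t₂ : ℝ) + 1 + Real.logb 2 3 + Real.logb 2 (c + 1) ≤ t₁)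
    (hI1 : 2 ^ t₁ ≤ A - a)
    (hJ2 : B - b ≤ 2 ^ (t₂ + 1))
    (hcI1 : (a : ℝ) + ((A : ℝ) - (a : ℝ)) / 3 ≤ ℓ)
    (hcJ1 : (b : ℝ) + ((B : ℝ) - (b : ℝ)) / 3 ≤ ℓ)
    (hcI2 : (ℓ : ℝ) ≤ (A : ℝ) - ((A : ℝ) - (a : ℝ)) / 3)
    (hcJ2 : (ℓ : ℝ) ≤ (B : ℝ) - ((B : ℝ) - (b : ℝ)) / 3)
    (hch : b ≤ j0 + c * (B - b)) (hi0 : i0 ≤ a) :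
    i0 < j0 ∧ a < b ∧ B < A := by
  have hsep' : 3 * ((c : ℝ) + 1) * (2 : ℝ) ^ (t₂ + 1) ≤ (2 : ℝ) ^ t₁ := by
    have h2 : (2 : ℝ) ^ ((t₂ : ℝ) + 1 + Real.logb 2 3 + Real.logb 2 (c + 1))
        ≤ (2 : ℝ) ^ (t₁ : ℝ) := Real.rpow_le_rpow_of_exponent_le one_le_two hsep
    have e1 : (2 : ℝ) ^ ((t₂ : ℝ) + 1 + Real.logb 2 3 + Real.logb 2 (c + 1))
        = (2 : ℝ) ^ ((t₂ : ℝ) + 1) * 3 * ((c : ℝ) + 1) := by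
      rw [Real.rpow_add two_pos, Real.rpow_add two_pos,
        Real.rpow_logb two_pos (by norm_num) (by norm_num : (0:ℝ) < 3),
        Real.rpow_logb two_pos (by norm_num) (by positivity)]
    have e2 : (2 : ℝ) ^ ((t₂ : ℝ) + 1) = (2 : ℝ) ^ (t₂ + 1) := by
      rw [← Real.rpow_natCast 2 (t₂ + 1)]; push_cast; ring_nf
    have e3 : (2 : ℝ) ^ (t₁ : ℝ) = (2 : ℝ) ^ t₁ := by
      rw [← Real.rpow_natCast 2 t₁]
    rw [e1, e2, e3] at h2
    linarith
  have hgIlow : (2 : ℝ) ^ t₁ ≤ (A : ℝ) - (a : ℝ) := by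
    have h := (Nat.cast_le (α := ℝ)).mpr hI1
    rwa [Nat.cast_sub haA.le, Nat.cast_pow] at h
  have hgJhigh : (B : ℝ) - (b : ℝ) ≤ (2 : ℝ) ^ (t₂ + 1) := by
    have h := (Nat.cast_le (α := ℝ)).mpr hJ2
    rwa [Nat.cast_sub hbB.le, Nat.cast_pow] at h
  have hgJpos : (0 : ℝ) < (B : ℝ) - (b : ℝ) := by
    have : (b : ℝ) < (B : ℝ) := by exact_mod_cast hbB
    linarith
  have hgap3 : 3 * ((c : ℝ) + 1) * ((B : ℝ) - (b : ℝ)) ≤ (A : ℝ) - (a : ℝ) := by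
    have h1 : 3 * ((c : ℝ) + 1) * ((B : ℝ) - (b : ℝ))
        ≤ 3 * ((c : ℝ) + 1) * (2 : ℝ) ^ (t₂ + 1) :=
      mul_le_mul_of_nonneg_left hgJhigh (by positivity)
    linarith
  have hchR : (b : ℝ) - (c : ℝ) * ((B : ℝ) - (b : ℝ)) ≤ (j0 : ℝ) := by
    have h := (Nat.cast_le (α := ℝ)).mpr hch
    rw [Nat.cast_add, Nat.cast_mul, Nat.cast_sub hbB.le] at h
    linarith
  have hi0R : (i0 : ℝ) ≤ (a : ℝ) := by exact_mod_cast hi0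
  refine ⟨?_, ?_, ?_⟩
  · have : (i0 : ℝ) < (j0 : ℝ) := by nlinarith [hgJpos, hgap3]
    exact_mod_cast this
  · have : (a : ℝ) < (b : ℝ) := by nlinarith [hgJpos, hgap3]
    exact_mod_cast this
  · have : (B : ℝ) < (A : ℝ) := by nlinarith [hgJpos, hgap3]
    exact_mod_cast this

/-- If two `c`-gap increasing subsequences from a greedily-interleaved family are both
`(1/3)`-cut at `c` with slack by `ℓ`, at scales `t₁` and `t₂` with
`t₁ ≥ t₂ + 1 + log₂ 3 + log₂ (c+1)`, then `f(j_{c+1}) < f(i_{c+1})`. -/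
theorem stmt17 (n k₀ c : ℕ) (hc : c + 1 < k₀) (f : Fin n → ℝ)
    (T : Finset (Fin k₀ → Fin n))
    (hincr : ∀ s ∈ T, StrictMono s ∧ StrictMono (f ∘ s))
    (hdisj : ∀ s ∈ T, ∀ s' ∈ T, s ≠ s' → ∀ a b, s a ≠ s' b)
    -- each element of T is a c-gap subsequence: c is the least index maximizing the gap
    (hgap : ∀ s ∈ T, ∀ b, ∀ hb : b + 1 < k₀,
      (s ⟨b + 1, hb⟩ : ℕ) - (s ⟨b, by omega⟩ : ℕ) ≤
      (s ⟨c + 1, hc⟩ : ℕ) - (s ⟨c, by omega⟩ : ℕ))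
    (hgapleast : ∀ s ∈ T, ∀ c', ∀ hc' : c' < c, ∃ b, ∃ hb : b + 1 < k₀,
      (s ⟨c' + 1, by omega⟩ : ℕ) - (s ⟨c', by omega⟩ : ℕ) <
      (s ⟨b + 1, hb⟩ : ℕ) - (s ⟨b, by omega⟩ : ℕ))
    -- greedy interleaving property
    (hinter : ∀ i ∈ T, ∀ j ∈ T, ∀ ℓ' : ℕ, ∀ hℓ' : ℓ' + 1 < k₀,
      i ⟨0, by omega⟩ < j ⟨0, by omega⟩ →
      i ⟨ℓ', by omega⟩ < j ⟨ℓ', by omega⟩ →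
      j ⟨ℓ' + 1, hℓ'⟩ < i ⟨ℓ' + 1, hℓ'⟩ →
      f (j ⟨ℓ' + 1, hℓ'⟩) < f (i ⟨ℓ' + 1, hℓ'⟩))
    (ℓ t₁ t₂ : ℕ) (hℓn : ℓ < n)
    (hsep : (t₂ : ℝ) + 1 + Real.logb 2 3 + Real.logb 2 (c + 1) ≤ t₁)
    (I J : Fin k₀ → Fin n) (hI : I ∈ T) (hJ : J ∈ T)
    (hscaleI : 2 ^ t₁ ≤ (I ⟨c + 1, hc⟩ : ℕ) - (I ⟨c, by omega⟩ : ℕ) ∧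
      (I ⟨c + 1, hc⟩ : ℕ) - (I ⟨c, by omega⟩ : ℕ) ≤ 2 ^ (t₁ + 1))
    (hcutI : ((I ⟨c, by omega⟩ : ℕ) : ℝ) +
        (((I ⟨c + 1, hc⟩ : ℕ) : ℝ) - ((I ⟨c, by omega⟩ : ℕ) : ℝ)) / 3 ≤ ℓ ∧
      (ℓ : ℝ) ≤ ((I ⟨c + 1, hc⟩ : ℕ) : ℝ) -
        (((I ⟨c + 1, hc⟩ : ℕ) : ℝ) - ((I ⟨c, by omega⟩ : ℕ) : ℝ)) / 3)
    (hscaleJ : 2 ^ t₂ ≤ (J ⟨c + 1, hc⟩ : ℕ) - (J ⟨c, by omega⟩ : ℕ) ∧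
      (J ⟨c + 1, hc⟩ : ℕ) - (J ⟨c, by omega⟩ : ℕ) ≤ 2 ^ (t₂ + 1))
    (hcutJ : ((J ⟨c, by omega⟩ : ℕ) : ℝ) +
        (((J ⟨c + 1, hc⟩ : ℕ) : ℝ) - ((J ⟨c, by omega⟩ : ℕ) : ℝ)) / 3 ≤ ℓ ∧
      (ℓ : ℝ) ≤ ((J ⟨c + 1, hc⟩ : ℕ) : ℝ) -
        (((J ⟨c + 1, hc⟩ : ℕ) : ℝ) - ((J ⟨c, by omega⟩ : ℕ) : ℝ)) / 3) :
    f (J ⟨c + 1, hc⟩) < f (I ⟨c + 1, hc⟩) := by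
  obtain ⟨hImono, -⟩ := hincr I hI
  obtain ⟨hJmono, -⟩ := hincr J hJ
  have haA : (I ⟨c, by omega⟩ : ℕ) < (I ⟨c + 1, hc⟩ : ℕ) :=
    hImono (Fin.mk_lt_mk.mpr (by omega))
  have hbB : (J ⟨c, by omega⟩ : ℕ) < (J ⟨c + 1, hc⟩ : ℕ) :=
    hJmono (Fin.mk_lt_mk.mpr (by omega))
  have hchain : ∀ m : ℕ, ∀ _hm : m ≤ c, (J ⟨m, by omega⟩ : ℕ) ≤ (J ⟨0, by omega⟩ : ℕ)
      + m * ((J ⟨c + 1, hc⟩ : ℕ) - (J ⟨c, by omega⟩ : ℕ)) := by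
    intro m
    induction m with
    | zero => intro _; simp
    | succ m ih =>
      intro hm
      have h1 := hgap J hJ m (by omega)
      have h2 : (J ⟨m, by omega⟩ : ℕ) < (J ⟨m + 1, by omega⟩ : ℕ) :=
        hJmono (Fin.mk_lt_mk.mpr (by omega))
      have h3 := ih (by omega)
      have hstep : (J ⟨m + 1, by omega⟩ : ℕ) ≤ (J ⟨m, by omega⟩ : ℕ)
          + ((J ⟨c + 1, hc⟩ : ℕ) - (J ⟨c, by omega⟩ : ℕ)) := by omega
      calc (J ⟨m + 1, by omega⟩ : ℕ)
          ≤ (J ⟨m, by omega⟩ : ℕ)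
            + ((J ⟨c + 1, hc⟩ : ℕ) - (J ⟨c, by omega⟩ : ℕ)) := hstep
        _ ≤ ((J ⟨0, by omega⟩ : ℕ)
            + m * ((J ⟨c + 1, hc⟩ : ℕ) - (J ⟨c, by omega⟩ : ℕ)))
            + ((J ⟨c + 1, hc⟩ : ℕ) - (J ⟨c, by omega⟩ : ℕ)) :=
          Nat.add_le_add_right h3 _
        _ = (J ⟨0, by omega⟩ : ℕ)
            + (m + 1) * ((J ⟨c + 1, hc⟩ : ℕ) - (J ⟨c, by omega⟩ : ℕ)) := by ring
  have hJc := hchain c le_rfl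
  have hI0 : (I ⟨0, by omega⟩ : ℕ) ≤ (I ⟨c, by omega⟩ : ℕ) :=
    Fin.le_def.mp (hImono.monotone (Fin.mk_le_mk.mpr (Nat.zero_le c)))
  obtain ⟨h0, hab, hBA⟩ := aux17 c t₁ t₂ ℓ _ _ _ _ _ _ haA hbB hsep
    hscaleI.1 hscaleJ.2 hcutI.1 hcutJ.1 hcutI.2 hcutJ.2 hJc hI0
  exact hinter I hI J hJ c hc (Fin.lt_def.mpr h0) (Fin.lt_def.mpr hab) (Fin.lt_def.mpr hBA)
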